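/- Let a_1, …, a_t be nonnegative real numbers and let ℓ ≤ t. Then the elementary symmetric polynomial of degree ℓ satisfies: sum over all ℓ-element subsets S of [t] of the product of a_i for i in S is at most binomial(t, ℓ) · (sum_{i=1}^t a_i / t)^ℓ. -/

import Mathlib

open Finset

-- tangent line lemma
lemma tangent (m : ℕ) {w z : ℝ} (hw : 0 ≤ w) (hz : 0 ≤ z) :
    w ^ (m+1) + (m+1 : ℝ) * w ^ m * (z - w) ≤ z ^ (m+1) := by
  rcases eq_or_lt_of_le hw with h | h
  · subst h
    cases m with
    | zero => simp
    | succ k => simp; positivity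
  · have h1 : (-2 : ℝ) ≤ z / w - 1 := by
      have : 0 ≤ z / w := div_nonneg hz h.le
      linarith
    have := one_add_mul_le_pow h1 (m+1)
    have h2 : (1 : ℝ) + (z / w - 1) = z / w := by ring
    rw [h2] at this
    have h3 := mul_le_mul_of_nonneg_right this (pow_nonneg h.le (m+1))
    calc w ^ (m+1) + (m+1 : ℝ) * w ^ m * (z - w)
        = (1 + (↑(m+1)) * (z / w - 1)) * w ^ (m+1) := by
          field_simp
          push_cast
          ring
      _ ≤ (z / w) ^ (m+1) * w ^ (m+1) := h3
      _ = z ^ (m+1) := by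
          rw [div_pow, div_mul_cancel₀]
          positivity

lemma scalar (t m : ℕ) {x y : ℝ} (hx : 0 ≤ x) (hy : 0 ≤ y) :
    (Nat.choose t (m+1) : ℝ) * x^(m+1) + (Nat.choose t m : ℝ) * x^m * y
      ≤ (Nat.choose (t+1) (m+1) : ℝ) * (((t:ℝ)*x + y)/(t+1))^(m+1) := by
  set z : ℝ := ((t:ℝ)*x + y)/(t+1) with hzdef
  have hz : 0 ≤ z := by positivity
  have htan := tangent m hx hz
  have hmul := mul_le_mul_of_nonneg_left htan (by positivity : (0:ℝ) ≤ (Nat.choose (t+1) (m+1) : ℝ))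
  refine le_trans (le_of_eq ?_) hmul
  have hzx : z - x = (y - x)/(t+1) := by
    rw [hzdef]
    field_simp
    ring
  have hkey : (Nat.choose (t+1) (m+1) : ℝ) * ((m:ℝ)+1) = ((t:ℝ)+1) * (Nat.choose t m : ℝ) := by
    exact_mod_cast (Nat.add_one_mul_choose_eq t m).symm
  have hpascal : (Nat.choose (t+1) (m+1) : ℝ) = (Nat.choose t m : ℝ) + (Nat.choose t (m+1) : ℝ) := by
    exact_mod_cast Nat.choose_succ_succ (t) (m)
  have ht1 : (t:ℝ) + 1 ≠ 0 := by positivity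
  rw [hzx]
  field_simp
  linear_combination (x^(m+1)-x^m*y)*hkey - (((t:ℝ)+1)*x^(m+1))*hpascal

lemma esymm_rec (t ℓ : ℕ) (a : Fin (t+1) → ℝ) :
    ∑ S ∈ (univ : Finset (Fin (t+1))).powersetCard (ℓ+1), ∏ i ∈ S, a i
    = (∑ S ∈ (univ : Finset (Fin t)).powersetCard (ℓ+1), ∏ i ∈ S, a i.castSucc)
      + a (Fin.last t) * ∑ S ∈ (univ : Finset (Fin t)).powersetCard ℓ, ∏ i ∈ S, a i.castSucc := by
  have hnotmem : Fin.last t ∉ (univ : Finset (Fin t)).map Fin.castSuccEmb := by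
    simp [Fin.castSuccEmb]
    intro i
    exact Fin.castSucc_lt_last i |>.ne
  rw [Fin.univ_castSuccEmb, Finset.cons_eq_insert,
    Finset.powersetCard_succ_insert hnotmem]
  have hdisj : Disjoint (powersetCard (ℓ+1) ((univ : Finset (Fin t)).map Fin.castSuccEmb))
      ((powersetCard ℓ ((univ : Finset (Fin t)).map Fin.castSuccEmb)).image (insert (Fin.last t))) := by
    rw [Finset.disjoint_left]
    intro S hS hS'
    obtain ⟨T, hT, rfl⟩ := Finset.mem_image.mp hS'
    have := (Finset.mem_powersetCard.mp hS).1 (Finset.mem_insert_self _ _)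
    exact hnotmem this
  rw [Finset.sum_union hdisj]
  have hlast : ∀ S : Finset (Fin t), Fin.last t ∉ S.map Fin.castSuccEmb := by
    intro S h
    obtain ⟨i, _, hi⟩ := Finset.mem_map.mp h
    exact (Fin.castSucc_lt_last i).ne hi
  congr 1
  · rw [Finset.powersetCard_map, Finset.sum_map]
    refine Finset.sum_congr rfl fun S _ => ?_
    show ∏ i ∈ S.map Fin.castSuccEmb, a i = _
    rw [Finset.prod_map]
    rfl
  · rw [Finset.sum_image, Finset.powersetCard_map, Finset.sum_map, Finset.mul_sum]
    · refine Finset.sum_congr rfl fun S _ => ?_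
      show ∏ i ∈ insert (Fin.last t) (S.map Fin.castSuccEmb), a i = _
      rw [Finset.prod_insert (hlast S), Finset.prod_map]
      rfl
    · intro S hS T hT hST
      have hlS : Fin.last t ∉ S := fun h => hnotmem ((Finset.mem_powersetCard.mp hS).1 h)
      have hlT : Fin.last t ∉ T := fun h => hnotmem ((Finset.mem_powersetCard.mp hT).1 h)
      have := congrArg (Finset.erase · (Fin.last t)) hST
      simpa [Finset.erase_insert, hlS, hlT] using this

lemma key : ∀ (t : ℕ) (a : Fin t → ℝ), (∀ i, 0 ≤ a i) → ∀ ℓ : ℕ,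
    ∑ S ∈ (univ : Finset (Fin t)).powersetCard ℓ, ∏ i ∈ S, a i
      ≤ (Nat.choose t ℓ : ℝ) * ((∑ i, a i) / t) ^ ℓ := by
  intro t
  induction t with
  | zero =>
    intro a ha ℓ
    cases ℓ with
    | zero => simp
    | succ m =>
      rw [show (univ : Finset (Fin 0)) = (∅ : Finset (Fin 0)) from rfl,
        Finset.powersetCard_eq_empty.mpr (by simp)]
      simp
  | succ t IH =>
    intro a ha ℓ
    cases ℓ with
    | zero => simp
    | succ m =>
      rw [esymm_rec t m a]
      set a' : Fin t → ℝ := fun i => a i.castSucc with ha'def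
      have ha' : ∀ i, 0 ≤ a' i := fun i => ha _
      set x : ℝ := (∑ i, a' i) / t with hxdef
      have hx : 0 ≤ x := by
        apply div_nonneg _ (Nat.cast_nonneg t)
        exact Finset.sum_nonneg fun i _ => ha' i
      have hy : 0 ≤ a (Fin.last t) := ha _
      have h1 := IH a' ha' (m+1)
      have h2 := IH a' ha' m
      have h2' := mul_le_mul_of_nonneg_left h2 hy
      have hsum : (∑ i, a i) = (t:ℝ) * x + a (Fin.last t) := by
        rw [Fin.sum_univ_castSucc]
        congr 1
        rcases Nat.eq_zero_or_pos t with rfl | ht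
        · simp [hxdef]
        · rw [hxdef]
          field_simp
          rfl
      calc (∑ S ∈ (univ : Finset (Fin t)).powersetCard (m+1), ∏ i ∈ S, a i.castSucc)
            + a (Fin.last t) * ∑ S ∈ (univ : Finset (Fin t)).powersetCard m, ∏ i ∈ S, a i.castSucc
          ≤ (Nat.choose t (m+1) : ℝ) * x^(m+1) + a (Fin.last t) * ((Nat.choose t m : ℝ) * x^m) := by
            exact add_le_add h1 h2'
        _ = (Nat.choose t (m+1) : ℝ) * x^(m+1) + (Nat.choose t m : ℝ) * x^m * a (Fin.last t) := by ring
        _ ≤ (Nat.choose (t+1) (m+1) : ℝ) * (((t:ℝ)*x + a (Fin.last t))/(t+1)) ^ (m+1) :=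
            scalar t m hx hy
        _ = (Nat.choose (t+1) (m+1) : ℝ) * ((∑ i, a i) / (((t+1 : ℕ) : ℝ))) ^ (m+1) := by
            rw [hsum]; push_cast; ring
      
theorem stmt12 (t : ℕ) (a : Fin t → ℝ) (ha : ∀ i, 0 ≤ a i) (ℓ : ℕ) (hℓ : ℓ ≤ t) :
    ∑ S ∈ Finset.univ.powersetCard ℓ, ∏ i ∈ S, a i
      ≤ (Nat.choose t ℓ : ℝ) * ((∑ i, a i) / t) ^ ℓ := by
  exact key t a ha ℓ
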